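/- Let K be a field, f ∈ K[T] monic irreducible, L = K[S]/f(S), and x = s + n a Jordan-Chevalley decomposition of an f-primary endomorphism x of a finite-dimensional K-vector space V. Then the K[S]-module structure on V with S acting as s makes V an L-vector space, n is L-linear for this structure, and dim_L V = dim_K V / deg f. -/
import Mathlib
set_option maxHeartbeats 1000000
set_option synthInstance.maxHeartbeats 400000

open Polynomial

lemma minpoly_s_eq {K V : Type} [Field K] [AddCommGroup V] [Module K V]
    [FiniteDimensional K V] (f : K[X]) (hf : f.Monic) [Fact (Irreducible f)]
    (x s n : Module.End K V) (k : ℕ) (hk : 1 ≤ k) (hprim : minpoly K x = f ^ k)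
    (hx : x = s + n) (hs : Squarefree (minpoly K s)) (hn : IsNilpotent n)
    (hc : Commute s n) : minpoly K s = f := by
  have hirr : Irreducible f := Fact.out
  have hfdeg : 0 < f.natDegree := hf.natDegree_pos.mpr hirr.ne_one
  have hnontriv : Nontrivial (Module.End K V) := by
    by_contra h
    have hss : Subsingleton (Module.End K V) := not_nontrivial_iff_subsingleton.mp h
    have h1 : aeval x (1 : K[X]) = 0 := Subsingleton.elim _ _
    have h2 := minpoly.min K x monic_one h1
    rw [hprim, degree_one] at h2
    have h3 : (f ^ k).natDegree ≤ 0 := natDegree_le_iff_degree_le.mpr (by simpa using h2)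
    rw [natDegree_pow] at h3
    have := Nat.eq_zero_of_le_zero h3
    rcases Nat.mul_eq_zero.mp this with h | h <;> omega
  -- x commutes with n
  have hxn : Commute x n := by rw [hx]; exact (hc.add_left (Commute.refl n))
  -- the commutative subalgebra generated by x and n
  set A := Algebra.adjoin K ({x, n} : Set (Module.End K V)) with hA
  letI : CommRing A := Algebra.adjoinCommRingOfComm K (by
    rintro a (rfl | rfl) b (rfl | rfl)
    · rfl
    · exact hxn
    · exact hxn.symm
    · rfl)
  have hxA : x ∈ A := Algebra.subset_adjoin (by simp)
  have hnA : n ∈ A := Algebra.subset_adjoin (by simp)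
  set x' : A := ⟨x, hxA⟩ with hx'
  set n' : A := ⟨n, hnA⟩ with hn'
  set s' : A := x' - n' with hs'
  have hval : (A.val : A →ₐ[K] Module.End K V) s' = s := by
    have : s = x - n := by rw [hx]; abel
    simp [hs', hx', hn', this]
  -- f(x') is nilpotent
  have hfx : IsNilpotent (aeval x' f) := by
    refine ⟨k, Subtype.ext ?_⟩
    show (A.val) ((aeval x' f) ^ k) = 0
    rw [map_pow, ← Polynomial.aeval_algHom_apply, ← map_pow]
    show aeval x (f ^ k) = 0
    rw [← hprim]; exact minpoly.aeval K x
  have hn'nil : IsNilpotent n' := by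
    obtain ⟨m, hm⟩ := hn
    exact ⟨m, Subtype.ext (by simpa using hm)⟩
  have hsx : s' - x' = -n' := by rw [hs']; abel
  have hsub : IsNilpotent (aeval s' f - aeval x' f) :=
    isNilpotent_aeval_sub_of_isNilpotent_sub f (hsx ▸ hn'nil.neg)
  have hfs' : IsNilpotent (aeval s' f) := by
    have h4 := (Commute.all (aeval s' f - aeval x' f) (aeval x' f)).isNilpotent_add hsub hfx
    rwa [sub_add_cancel] at h4
  have hfs : IsNilpotent (aeval s f) := by
    have := hfs'.map (A.val)
    rwa [← Polynomial.aeval_algHom_apply, hval] at this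
  obtain ⟨m, hm⟩ := hfs
  have hm0 : m ≠ 0 := by
    rintro rfl
    rw [pow_zero] at hm
    exact one_ne_zero hm
  have hdvd : minpoly K s ∣ f ^ m := by
    apply minpoly.dvd
    rw [map_pow, hm]
  have hdvd' : minpoly K s ∣ f := (hs.dvd_pow_iff_dvd hm0).mp hdvd
  have hsint : IsIntegral K s := Algebra.IsIntegral.isIntegral s
  have hmon : (minpoly K s).Monic := minpoly.monic hsint
  have hnu : ¬ IsUnit (minpoly K s) := by
    intro hu
    have := minpoly.natDegree_pos hsint
    have := natDegree_eq_zero_of_isUnit hu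
    omega
  obtain ⟨c, hcf⟩ := hdvd'
  rcases hirr.isUnit_or_isUnit hcf with h | h
  · exact absurd h hnu
  · have : Associated (minpoly K s) f := ⟨(h.unit), by simp [hcf]⟩
    exact eq_of_monic_of_associated hmon hf this

open Module in
/-- Let `x = s + n` be a Jordan-Chevalley decomposition of an `f`-primary endomorphism.
Then the `K[S]`-module structure on `V` with `S` acting as `s` makes `V` an `L`-vector
space for `L = K[S]/(f)` (i.e. the action factors through a `K`-algebra homomorphism
`φ : L → End_K(V)` with `φ(S) = s`), `n` is `L`-linear for this structure, and
`dim_L V = dim_K V / deg f`. -/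
theorem jordan_chevalley_L_structure {K V : Type} [Field K] [AddCommGroup V] [Module K V]
    [FiniteDimensional K V] (f : K[X]) (hf : f.Monic) [Fact (Irreducible f)]
    (x s n : Module.End K V) (k : ℕ) (hk : 1 ≤ k) (hprim : minpoly K x = f ^ k)
    (hx : x = s + n) (hs : Squarefree (minpoly K s)) (hn : IsNilpotent n)
    (hc : Commute s n) :
    ∃ φ : AdjoinRoot f →ₐ[K] Module.End K V,
      φ (AdjoinRoot.root f) = s ∧
      (∀ c : AdjoinRoot f, Commute (φ c) n) ∧
      (letI : Module (AdjoinRoot f) V := Module.compHom V φ.toRingHom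
       Module.finrank (AdjoinRoot f) V = Module.finrank K V / f.natDegree) := by
  have hirr : Irreducible f := Fact.out
  have hmins : minpoly K s = f := minpoly_s_eq f hf x s n k hk hprim hx hs hn hc
  have hfs : aeval s f = 0 := by rw [← hmins]; exact minpoly.aeval K s
  have hann : ∀ a ∈ Ideal.span ({f} : Set K[X]), aeval s a = 0 := by
    intro a ha
    rw [Ideal.mem_span_singleton] at ha
    obtain ⟨c, rfl⟩ := ha
    rw [map_mul, hfs, zero_mul]
  set φ : AdjoinRoot f →ₐ[K] Module.End K V :=
    Ideal.Quotient.liftₐ (Ideal.span {f}) (Polynomial.aeval s) hann with hφ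
  have hφmk : ∀ p : K[X], φ (AdjoinRoot.mk f p) = aeval s p := fun p =>
    Ideal.Quotient.lift_mk _ _ _
  have hroot : φ (AdjoinRoot.root f) = s := by
    rw [AdjoinRoot.root, hφmk, aeval_X]
  refine ⟨φ, hroot, ?_, ?_⟩
  · intro c
    induction c using AdjoinRoot.induction_on with
    | ih p =>
      rw [hφmk]
      induction p using Polynomial.induction_on' with
      | add p q hp hq => rw [map_add]; exact hp.add_left hq
      | monomial i a =>
        rw [aeval_monomial]
        exact (show Commute (algebraMap K (Module.End K V) a) n from
          Algebra.commutes a n).mul_left (hc.pow_left i)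
  · letI : Module (AdjoinRoot f) V := Module.compHom V φ.toRingHom
    haveI : IsScalarTower K (AdjoinRoot f) V := by
      constructor
      intro a b v
      show φ (a • b) v = a • (φ b v)
      rw [Algebra.smul_def, map_mul, AlgHom.commutes]
      rfl
    have h1 : finrank K (AdjoinRoot f) * finrank (AdjoinRoot f) V = finrank K V :=
      finrank_mul_finrank K (AdjoinRoot f) V
    have h2 : finrank K (AdjoinRoot f) = f.natDegree := by
      rw [(AdjoinRoot.powerBasis hf.ne_zero).finrank, AdjoinRoot.powerBasis_dim]
    rw [h2] at h1
    have hfdeg : 0 < f.natDegree := hf.natDegree_pos.mpr hirr.ne_one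
    rw [← h1, Nat.mul_div_cancel_left _ hfdeg]
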